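/- Let F be a field, m, k, n, r ≥ 1, D, h ∈ ℕ, and suppose there are families α : Fin r → Fin m → Fin k → F[x], β : Fin r → Fin k → Fin n → F[x], γ : Fin r → Fin n → Fin m → F[x] with the following properties: for all matrices A : Matrix (Fin m) (Fin k) F, B : Matrix (Fin k) (Fin n) F, and indices i, j, the polynomial Q_{A,B,i,j}(x) = ∑ ℓ, (γ ℓ j i) * (∑ p q, (α ℓ p q) * C(A p q)) * (∑ q p', (β ℓ q p') * C(B q p')) (where C embeds F as constants in F[x]) has degree at most D, and its coefficient of x^h equals (A * B) i j while its coefficients of x^e for e < h vanish. If F has at least D + 1 elements, then there is a bilinear algorithm of rank r·(D+1) for (m,k,n) matrix multiplication over F. -/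

import Mathlib

/-- A bilinear algorithm of rank `r` for `(m,k,n)` matrix multiplication over `F`:
coefficient families `α`, `β`, `γ` computing every entry of every matrix product
`A * B` via `r` bilinear products. -/
def IsBilinearAlg (F : Type*) [Field F] (m k n r : ℕ)
    (α : Fin r → Fin m → Fin k → F)
    (β : Fin r → Fin k → Fin n → F)
    (γ : Fin r → Fin n → Fin m → F) : Prop :=
  ∀ (A : Matrix (Fin m) (Fin k) F) (B : Matrix (Fin k) (Fin n) F)
    (i : Fin m) (j : Fin n),
    (A * B) i j =
      ∑ l : Fin r, γ l j i *
        (∑ p : Fin m, ∑ q : Fin k, α l p q * A p q) *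
        (∑ q : Fin k, ∑ p' : Fin n, β l q p' * B q p')

/-- There exists a bilinear algorithm of rank `r` for `(m,k,n)` matrix multiplication. -/
def HasBilinearAlg (F : Type*) [Field F] (m k n r : ℕ) : Prop :=
  ∃ α β γ, IsBilinearAlg F m k n r α β γ

/-- a border-rank-r (approximate, with error order `x^(h+1)` and degree
bound `D`) bilinear algorithm for (m,k,n) matrix multiplication over a field with at
least `D+1` elements yields an exact bilinear algorithm of rank `r·(D+1)`. -/
theorem borderRank_to_rank (F : Type*) [Field F] (m k n r D h : ℕ)
    (hm : 1 ≤ m) (hk : 1 ≤ k) (hn : 1 ≤ n) (hr : 1 ≤ r)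
    (α : Fin r → Fin m → Fin k → Polynomial F)
    (β : Fin r → Fin k → Fin n → Polynomial F)
    (γ : Fin r → Fin n → Fin m → Polynomial F)
    (happrox : ∀ (A : Matrix (Fin m) (Fin k) F) (B : Matrix (Fin k) (Fin n) F)
      (i : Fin m) (j : Fin n),
      (∑ l : Fin r, γ l j i *
          (∑ p : Fin m, ∑ q : Fin k, α l p q * Polynomial.C (A p q)) *
          (∑ q : Fin k, ∑ p' : Fin n, β l q p' * Polynomial.C (B q p'))).degree ≤ D ∧
      (∑ l : Fin r, γ l j i *
          (∑ p : Fin m, ∑ q : Fin k, α l p q * Polynomial.C (A p q)) *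
          (∑ q : Fin k, ∑ p' : Fin n, β l q p' * Polynomial.C (B q p'))).coeff h
        = (A * B) i j ∧
      ∀ e : ℕ, e < h →
        (∑ l : Fin r, γ l j i *
            (∑ p : Fin m, ∑ q : Fin k, α l p q * Polynomial.C (A p q)) *
            (∑ q : Fin k, ∑ p' : Fin n, β l q p' * Polynomial.C (B q p'))).coeff e = 0)
    (hF : ∃ s : Finset F, D + 1 ≤ s.card) :
    HasBilinearAlg F m k n (r * (D + 1)) := by
  classical
  -- obtain an injective family of D+1 nodes
  obtain ⟨s, hs⟩ := hF
  obtain ⟨t, -, ht⟩ := Finset.exists_subset_card_eq hs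
  let ev : t ≃ Fin (D + 1) := Finset.equivFinOfCardEq ht
  set v : Fin (D + 1) → F := fun i => (ev.symm i : F) with hv
  have hvinj : Function.Injective v := by
    intro a b hab
    exact ev.symm.injective (Subtype.ext hab)
  have hvs : Set.InjOn v (Finset.univ : Finset (Fin (D + 1))) := fun a _ b _ hab => hvinj hab
  -- Lagrange weights
  set w : Fin (D + 1) → F := fun i =>
    (Lagrange.basis (Finset.univ : Finset (Fin (D + 1))) v i).coeff h with hw
  -- interpolation: coeff h of a degree ≤ D polynomial
  have key : ∀ f : Polynomial F, f.degree ≤ D →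
      f.coeff h = ∑ i : Fin (D + 1), f.eval (v i) * w i := by
    intro f hf
    have hlt : f.degree < (Finset.univ : Finset (Fin (D + 1))).card := by
      rw [Finset.card_univ, Fintype.card_fin]
      exact lt_of_le_of_lt hf (by exact_mod_cast Nat.lt_succ_self D)
    have := Lagrange.eq_interpolate hvs hlt
    conv_lhs => rw [this]
    rw [Lagrange.interpolate_apply, Polynomial.finset_sum_coeff]
    refine Finset.sum_congr rfl fun i _ => ?_
    rw [Polynomial.coeff_C_mul]
  -- build the exact algorithm
  let e : Fin r × Fin (D + 1) ≃ Fin (r * (D + 1)) := finProdFinEquiv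
  refine ⟨fun L p q => (α (e.symm L).1 p q).eval (v (e.symm L).2),
          fun L q p' => (β (e.symm L).1 q p').eval (v (e.symm L).2),
          fun L j i => w (e.symm L).2 * (γ (e.symm L).1 j i).eval (v (e.symm L).2),
          ?_⟩
  intro A B i j
  obtain ⟨hdeg, hcoeff, -⟩ := happrox A B i j
  rw [← hcoeff, key _ hdeg]
  beta_reduce
  rw [Equiv.sum_comp e.symm
    (fun P : Fin r × Fin (D + 1) =>
      (w P.2 * (γ P.1 j i).eval (v P.2)) *
        (∑ p : Fin m, ∑ q : Fin k, (α P.1 p q).eval (v P.2) * A p q) *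
        (∑ q : Fin k, ∑ p' : Fin n, (β P.1 q p').eval (v P.2) * B q p'))]
  rw [Fintype.sum_prod_type, Finset.sum_comm]
  refine Finset.sum_congr rfl fun d _ => ?_
  simp only [Polynomial.eval_finset_sum, Polynomial.eval_mul, Polynomial.eval_C,
    Finset.sum_mul, Finset.mul_sum]
  refine Finset.sum_congr rfl fun l _ => Finset.sum_congr rfl fun _ _ =>
    Finset.sum_congr rfl fun _ _ => Finset.sum_congr rfl fun _ _ =>
    Finset.sum_congr rfl fun _ _ => by ring
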